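/- arXiv:math/0606199 — 5 statements merged into one kernel-verified Lean document; each statement's English description precedes it below -/
import Mathlib

section
/- Let φ : G → ℝ be a homogeneous quasi-homomorphism on a group G, and let D ≥ 0 satisfy |φ(xy) − φ(x) − φ(y)| ≤ D for all x, y ∈ G. If g ∈ G is a product of n ≥ 1 commutators, i.e. g = [a₁,b₁]·…·[aₙ,bₙ] with [a,b] = aba⁻¹b⁻¹, then |φ(g)| ≤ (2n − 1)·D. -/
/-- If `g` is a product of `n ≥ 1` commutators, then any homogeneous
quasi-homomorphism `φ` with defect bound `D` satisfies `|φ g| ≤ (2n - 1) * D`. -/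
theorem homogeneous_quasimorphism_commutator_product_bound {G : Type*} [Group G] (φ : G → ℝ)
    (D : ℝ) (hD : 0 ≤ D)
    (h_quasi : ∀ x y : G, |φ (x * y) - φ x - φ y| ≤ D)
    (h_hom : ∀ (x : G) (n : ℤ), φ (x ^ n) = n * φ x)
    (g : G) (n : ℕ) (hn : 1 ≤ n)
    (l : List G) (h_len : l.length = n)
    (h_comm : ∀ x ∈ l, ∃ a b : G, x = a * b * a⁻¹ * b⁻¹)
    (h_prod : g = l.prod) :
    |φ g| ≤ (2 * (n : ℝ) - 1) * D := by
  -- φ of inverse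
  have hinv : ∀ x : G, φ x⁻¹ = -φ x := by
    intro x
    have := h_hom x (-1)
    simpa using this
  -- conjugation invariance
  have hconj : ∀ a x : G, φ (a * x * a⁻¹) = φ x := by
    intro a x
    by_contra hne
    set c := φ (a * x * a⁻¹) - φ x with hc
    have hcne : c ≠ 0 := sub_ne_zero.mpr hne
    obtain ⟨m, hm⟩ := exists_nat_gt ((2 * D) / |c|)
    have hm1 : 1 ≤ m := by
      by_contra h
      have : m = 0 := by omega
      subst this
      simp at hm
      have : 2 * D / |c| ≥ 0 := div_nonneg (by linarith) (abs_nonneg _)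
      linarith
    have key : (m : ℝ) * |c| ≤ 2 * D := by
      have h1 := h_quasi a (x ^ (m : ℤ) * a⁻¹)
      have h2 := h_quasi (x ^ (m : ℤ)) a⁻¹
      have hpow : φ ((a * x * a⁻¹) ^ (m : ℤ)) = φ (a * x ^ (m : ℤ) * a⁻¹) := by
        rw [conj_zpow]
      have e1 : φ ((a * x * a⁻¹) ^ (m : ℤ)) = (m : ℝ) * φ (a * x * a⁻¹) := by
        simpa using h_hom (a * x * a⁻¹) (m : ℤ)
      have e2 : φ (x ^ (m : ℤ)) = (m : ℝ) * φ x := by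
        simpa using h_hom x (m : ℤ)
      have e3 : φ a⁻¹ = -φ a := hinv a
      have hmc : (m : ℝ) * c = (m : ℝ) * φ (a * x * a⁻¹) - (m : ℝ) * φ x := by ring
      have : |(m : ℝ) * c| ≤ 2 * D := by
        rw [hmc, ← e1, hpow, ← e2]
        have hmul : a * x ^ (m:ℤ) * a⁻¹ = a * (x ^ (m:ℤ) * a⁻¹) := by group
        rw [hmul]
        obtain ⟨h1a, h1b⟩ := abs_le.mp h1
        obtain ⟨h2a, h2b⟩ := abs_le.mp h2
        rw [e3] at h2a h2b
        rw [abs_le]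
        constructor <;> linarith
      calc (m : ℝ) * |c| = |(m : ℝ) * c| := by
            rw [abs_mul, abs_of_nonneg (by positivity : (0:ℝ) ≤ (m:ℝ))]
        _ ≤ 2 * D := this
    have hcpos : 0 < |c| := abs_pos.mpr hcne
    have h4 : 2 * D < (m : ℝ) * |c| := by
      rw [div_lt_iff₀ hcpos] at hm; linarith
    linarith
  -- each commutator has |φ| ≤ D
  have hcommbound : ∀ x ∈ l, |φ x| ≤ D := by
    intro x hx
    obtain ⟨a, b, rfl⟩ := h_comm x hx
    have h1 := h_quasi (a * b * a⁻¹) b⁻¹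
    have h2 : φ (a * b * a⁻¹) = φ b := hconj a b
    have h3 : φ b⁻¹ = -φ b := hinv b
    calc |φ (a * b * a⁻¹ * b⁻¹)|
        = |φ (a * b * a⁻¹ * b⁻¹) - φ (a * b * a⁻¹) - φ b⁻¹| := by rw [h2, h3]; ring_nf
      _ ≤ D := h1
  -- induction on the list
  have main : ∀ t : List G, (∀ x ∈ t, |φ x| ≤ D) → t ≠ [] →
      |φ t.prod| ≤ (2 * (t.length : ℝ) - 1) * D := by
    intro t
    induction t with
    | nil => intro _ h; exact absurd rfl h
    | cons x s ih =>
      intro hb _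
      rcases eq_or_ne s [] with rfl | hs
      · simp only [List.prod_cons, List.prod_nil, mul_one, List.length_cons,
          List.length_nil]
        have := hb x (by simp)
        push_cast
        linarith
      · have hx : |φ x| ≤ D := hb x (by simp)
        have hrec := ih (fun y hy => hb y (by simp [hy])) hs
        have hq := h_quasi x s.prod
        have hlen : (1 : ℝ) ≤ (s.length : ℝ) := by
          have : 1 ≤ s.length := List.length_pos_iff.mpr hs
          exact_mod_cast this
        have : |φ (x * s.prod)| ≤ D + D + (2 * (s.length : ℝ) - 1) * D := by
          calc |φ (x * s.prod)|
              = |(φ (x * s.prod) - φ x - φ s.prod) + φ x + φ s.prod| := by ring_nf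
            _ ≤ |φ (x * s.prod) - φ x - φ s.prod| + |φ x| + |φ s.prod| :=
                (abs_add_le _ _).trans (by gcongr; exact abs_add_le _ _)
            _ ≤ D + D + (2 * (s.length : ℝ) - 1) * D := by gcongr
        simp only [List.prod_cons, List.length_cons]
        push_cast
        linarith
  have hne : l ≠ [] := by
    intro h
    subst h
    simp at h_len
    omega
  have := main l hcommbound hne
  rw [h_prod, ← h_len]
  exact this
end

section
/- Let G be a group, g ∈ G, φ : G → ℝ a homogeneous quasi-homomorphism, and D ≥ 0 a constant with |φ(xy) − φ(x) − φ(y)| ≤ D for all x, y ∈ G. If for some integer k ≥ 1 the power gᵏ is a product of n ≥ 1 torsion elements, then |φ(g)| ≤ n·D/k. -/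
/-- If for some `k ≥ 1` the power `g ^ k` is a product of `n ≥ 1` torsion elements, then
any homogeneous quasi-homomorphism `φ` with defect bound `D` satisfies
`|φ g| ≤ n * D / k`. -/
theorem homogeneous_quasimorphism_power_torsion_bound {G : Type*} [Group G]
    (g : G) (φ : G → ℝ) (D : ℝ) (hD : 0 ≤ D)
    (h_quasi : ∀ x y : G, |φ (x * y) - φ x - φ y| ≤ D)
    (h_hom : ∀ (x : G) (n : ℤ), φ (x ^ n) = n * φ x)
    (k : ℕ) (hk : 1 ≤ k) (n : ℕ) (hn : 1 ≤ n)
    (l : List G) (h_len : l.length = n)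
    (h_tor : ∀ x ∈ l, ∃ m : ℕ, 0 < m ∧ x ^ m = 1)
    (h_prod : g ^ k = l.prod) :
    |φ g| ≤ (n : ℝ) * D / (k : ℝ) := by
  have hφ1 : φ 1 = 0 := by
    have := h_hom 1 0; simpa using this
  -- φ vanishes on torsion elements
  have hφtor : ∀ x ∈ l, φ x = 0 := by
    intro x hx
    obtain ⟨m, hm, hxm⟩ := h_tor x hx
    have h1 : φ (x ^ (m : ℤ)) = (m : ℝ) * φ x := h_hom x m
    rw [zpow_natCast, hxm, hφ1] at h1
    have hm' : (0 : ℝ) < (m : ℝ) := by exact_mod_cast hm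
    have := h1.symm
    rcases mul_eq_zero.mp this with h | h
    · exact absurd h (ne_of_gt hm')
    · exact h
  -- |φ (prod)| ≤ length * D for lists of torsion elements
  have key : ∀ L : List G, (∀ x ∈ L, φ x = 0) → |φ L.prod| ≤ (L.length : ℝ) * D := by
    intro L
    induction L with
    | nil => intro _; simpa [hφ1] using (by positivity : (0:ℝ) ≤ 0)
    | cons a t ih =>
      intro h
      have ha : φ a = 0 := h a (by simp)
      have ht := ih (fun x hx => h x (by simp [hx]))
      have hq := h_quasi a t.prod
      rw [ha] at hq
      have : |φ (a * t.prod)| ≤ |φ t.prod| + D := by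
        have := abs_sub_abs_le_abs_sub (φ (a * t.prod)) (φ t.prod)
        have h2 : |φ (a * t.prod) - φ t.prod| ≤ D := by
          simpa using hq
        linarith [this, h2]
      simp only [List.prod_cons, List.length_cons]
      push_cast
      linarith
  have hbound := key l hφtor
  rw [← h_prod] at hbound
  have hk' : (0 : ℝ) < (k : ℝ) := by exact_mod_cast hk
  have hhom : φ (g ^ k) = (k : ℝ) * φ g := by
    have := h_hom g k
    rw [zpow_natCast] at this
    exact_mod_cast this
  rw [hhom, abs_mul, abs_of_pos hk', h_len] at hbound
  rw [le_div_iff₀ hk']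
  linarith
end

section
/- Let G be a group and g ∈ G. Suppose there is a fixed integer N such that for every integer k ≥ 1 the power gᵏ is a product of at most N torsion elements of G. Then every homogeneous quasi-homomorphism φ : G → ℝ satisfies φ(g) = 0. -/
lemma quasi_list_bound {G : Type*} [Group G] (φ : G → ℝ) (D : ℝ)
    (hφ1 : φ 1 = 0)
    (hD : ∀ x y : G, |φ (x * y) - φ x - φ y| ≤ D) :
    ∀ l : List G, |φ l.prod - (l.map φ).sum| ≤ D * l.length := by
  intro l
  induction l with
  | nil => simp [hφ1]
  | cons a t ih =>
      simp only [List.prod_cons, List.map_cons, List.sum_cons, List.length_cons]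
      have h1 := hD a t.prod
      calc |φ (a * t.prod) - (φ a + (t.map φ).sum)|
          = |(φ (a * t.prod) - φ a - φ t.prod) + (φ t.prod - (t.map φ).sum)| := by ring_nf
        _ ≤ |φ (a * t.prod) - φ a - φ t.prod| + |φ t.prod - (t.map φ).sum| := abs_add_le _ _
        _ ≤ D + D * t.length := add_le_add h1 ih
        _ = D * (t.length + 1) := by ring
        _ = D * (↑(t.length + 1)) := by push_cast; ring

/-- If there is a fixed `N` such that every power `g ^ k` (`k ≥ 1`) is a product of at
most `N` torsion elements, then every homogeneous quasi-homomorphism vanishes on `g`. -/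
theorem homogeneous_quasimorphism_vanishes_of_bounded_torsion_length {G : Type*} [Group G]
    (g : G) (N : ℕ)
    (h_bdd : ∀ k : ℕ, 1 ≤ k → ∃ l : List G, l.length ≤ N ∧
      (∀ x ∈ l, ∃ m : ℕ, 0 < m ∧ x ^ m = 1) ∧ g ^ k = l.prod)
    (φ : G → ℝ)
    (h_quasi : ∃ D : ℝ, 0 ≤ D ∧ ∀ x y : G, |φ (x * y) - φ x - φ y| ≤ D)
    (h_hom : ∀ (x : G) (n : ℤ), φ (x ^ n) = n * φ x) :
    φ g = 0 := by
  obtain ⟨D, hD0, hD⟩ := h_quasi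
  have hφ1 : φ 1 = 0 := by
    have := h_hom 1 0
    simpa using this
  -- torsion elements vanish
  have htor : ∀ x : G, (∃ m : ℕ, 0 < m ∧ x ^ m = 1) → φ x = 0 := by
    rintro x ⟨m, hm, hxm⟩
    have h1 : φ (x ^ (m : ℤ)) = m * φ x := h_hom x m
    have h2 : (x : G) ^ (m : ℤ) = 1 := by rw [zpow_natCast, hxm]
    rw [h2, hφ1] at h1
    have hm' : (m : ℝ) ≠ 0 := by positivity
    have h3 : (m : ℝ) * φ x = 0 := h1.symm
    rcases mul_eq_zero.mp h3 with h | h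
    · exact absurd h hm'
    · exact h
  -- key bound: for all k ≥ 1, k * |φ g| ≤ D * N
  have key : ∀ k : ℕ, 1 ≤ k → (k : ℝ) * |φ g| ≤ D * N := by
    intro k hk
    obtain ⟨l, hlen, hltor, hprod⟩ := h_bdd k hk
    have hsum : (l.map φ).sum = 0 := by
      apply List.sum_eq_zero
      intro x hx
      simp only [List.mem_map] at hx
      obtain ⟨y, hy, rfl⟩ := hx
      exact htor y (hltor y hy)
    have hb := quasi_list_bound φ D hφ1 hD l
    rw [hsum, sub_zero, ← hprod] at hb
    have hgk : φ (g ^ k) = k * φ g := by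
      have := h_hom g k
      rwa [zpow_natCast] at this
    rw [hgk] at hb
    calc (k : ℝ) * |φ g| = |(k : ℝ) * φ g| := by
          rw [abs_mul, abs_of_nonneg (by positivity : (0:ℝ) ≤ (k:ℝ))]
      _ ≤ D * l.length := hb
      _ ≤ D * N := by
          apply mul_le_mul_of_nonneg_left _ hD0
          exact_mod_cast hlen
  by_contra h
  have habs : 0 < |φ g| := abs_pos.mpr h
  obtain ⟨k, hk⟩ := exists_nat_gt (D * N / |φ g|)
  have hk1 : 1 ≤ k + 1 := Nat.le_add_left 1 k
  have := key (k + 1) hk1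
  push_cast at this
  have hklt : D * N / |φ g| < (k + 1 : ℝ) := by
    linarith
  rw [div_lt_iff₀ habs] at hklt
  linarith
end

section
/- Let G be a group, let a, b, c ∈ G pairwise commute, and let φ, ψ ∈ G be involutions (φ² = ψ² = 1) such that φcφ⁻¹ = a and ψcψ⁻¹ = b. Then for every integer k, (a⁻¹b⁻¹c²)ᵏ = [cᵏ, φ]·[cᵏ, ψ], where [x,y] = xyx⁻¹y⁻¹. In particular each power of a⁻¹b⁻¹c² is a product of two commutators. -/
/-- If `a, b, c` pairwise commute and `φ, ψ` are involutions with `φcφ⁻¹ = a` and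
`ψcψ⁻¹ = b`, then `(a⁻¹b⁻¹c²)ᵏ = [cᵏ, φ] · [cᵏ, ψ]` for every integer `k`; in
particular each power of `a⁻¹b⁻¹c²` is a product of two commutators. -/
theorem power_eq_product_of_two_commutators {G : Type*} [Group G]
    (a b c φ ψ : G)
    (hab : a * b = b * a) (hac : a * c = c * a) (hbc : b * c = c * b)
    (hφ : φ ^ 2 = 1) (hψ : ψ ^ 2 = 1)
    (hφc : φ * c * φ⁻¹ = a) (hψc : ψ * c * ψ⁻¹ = b) :
    (∀ k : ℤ, (a⁻¹ * b⁻¹ * c ^ 2) ^ k =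
      (c ^ k * φ * (c ^ k)⁻¹ * φ⁻¹) * (c ^ k * ψ * (c ^ k)⁻¹ * ψ⁻¹)) ∧
    (∀ k : ℤ, ∃ p q r s : G, (a⁻¹ * b⁻¹ * c ^ 2) ^ k =
      (p * q * p⁻¹ * q⁻¹) * (r * s * r⁻¹ * s⁻¹)) := by
  have aux : ∀ X Y C : G, X * C = C * X → Y * C = C * Y →
      X * Y * (C * C) = C * X * (C * Y) := by
    intro X Y C h1 h2
    calc X * Y * (C * C) = X * ((Y * C) * C) := by group
    _ = X * ((C * Y) * C) := by rw [h2]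
    _ = X * (C * (Y * C)) := by group
    _ = X * (C * (C * Y)) := by rw [h2]
    _ = (X * C) * (C * Y) := by group
    _ = C * X * (C * Y) := by rw [h1]
  have main : ∀ k : ℤ, (a⁻¹ * b⁻¹ * c ^ 2) ^ k =
      (c ^ k * φ * (c ^ k)⁻¹ * φ⁻¹) * (c ^ k * ψ * (c ^ k)⁻¹ * ψ⁻¹) := by
    intro k
    have hA : φ * c ^ k * φ⁻¹ = a ^ k := by rw [← hφc, conj_zpow]
    have hB : ψ * c ^ k * ψ⁻¹ = b ^ k := by rw [← hψc, conj_zpow]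
    have hφinv : φ * (c ^ k)⁻¹ * φ⁻¹ = (a ^ k)⁻¹ := by
      rw [← hA]; group
    have hψinv : ψ * (c ^ k)⁻¹ * ψ⁻¹ = (b ^ k)⁻¹ := by
      rw [← hB]; group
    have hRHS : (c ^ k * φ * (c ^ k)⁻¹ * φ⁻¹) * (c ^ k * ψ * (c ^ k)⁻¹ * ψ⁻¹)
        = c ^ k * (a ^ k)⁻¹ * (c ^ k * (b ^ k)⁻¹) := by
      rw [← hφinv, ← hψinv]; group
    have hab' : Commute a⁻¹ b⁻¹ := ((show Commute a b from hab).inv_left).inv_right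
    have hac' : Commute a⁻¹ (c ^ 2) := ((show Commute a c from hac).inv_left).pow_right 2
    have hbc' : Commute b⁻¹ (c ^ 2) := ((show Commute b c from hbc).inv_left).pow_right 2
    have hLHS : (a⁻¹ * b⁻¹ * c ^ 2) ^ k = (a ^ k)⁻¹ * (b ^ k)⁻¹ * (c ^ k * c ^ k) := by
      rw [(hac'.mul_left hbc').mul_zpow, hab'.mul_zpow, inv_zpow, inv_zpow,
        show (c ^ 2 : G) = c * c from sq c, (Commute.refl c).mul_zpow]
    rw [hLHS, hRHS]
    exact aux _ _ _ ((show Commute a c from hac).zpow_zpow k k).inv_left.eq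
      ((show Commute b c from hbc).zpow_zpow k k).inv_left.eq
  exact ⟨main, fun k => ⟨c ^ k, φ, c ^ k, ψ, main k⟩⟩
end

section
/- Let G be a group, let a₁, a₂, b₁, b₂ ∈ G pairwise commute, and let φ₁, φ₂ ∈ G be involutions (φᵢ² = 1) with φᵢaᵢφᵢ⁻¹ = bᵢ for i = 1, 2. Then for every integer k, (a₁a₂b₁⁻¹b₂⁻¹)ᵏ = [a₁ᵏ, φ₁]·[a₂ᵏ, φ₂], where [x,y] = xyx⁻¹y⁻¹. In particular each power of a₁a₂b₁⁻¹b₂⁻¹ is a product of two commutators and of four involutions. -/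
/-- If `a₁, a₂, b₁, b₂` pairwise commute and `φᵢ` are involutions with `φᵢaᵢφᵢ⁻¹ = bᵢ`,
then `(a₁a₂b₁⁻¹b₂⁻¹)ᵏ = [a₁ᵏ, φ₁]·[a₂ᵏ, φ₂]` for every integer `k`; in particular each
power of `a₁a₂b₁⁻¹b₂⁻¹` is a product of two commutators and of four involutions. -/
theorem power_eq_two_commutators_and_four_involutions {G : Type*} [Group G]
    (a₁ a₂ b₁ b₂ φ₁ φ₂ : G)
    (h12 : a₁ * a₂ = a₂ * a₁) (ha1b1 : a₁ * b₁ = b₁ * a₁)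
    (ha1b2 : a₁ * b₂ = b₂ * a₁) (ha2b1 : a₂ * b₁ = b₁ * a₂)
    (ha2b2 : a₂ * b₂ = b₂ * a₂) (hb12 : b₁ * b₂ = b₂ * b₁)
    (hφ₁ : φ₁ ^ 2 = 1) (hφ₂ : φ₂ ^ 2 = 1)
    (hc₁ : φ₁ * a₁ * φ₁⁻¹ = b₁) (hc₂ : φ₂ * a₂ * φ₂⁻¹ = b₂) :
    (∀ k : ℤ, (a₁ * a₂ * b₁⁻¹ * b₂⁻¹) ^ k =
      (a₁ ^ k * φ₁ * (a₁ ^ k)⁻¹ * φ₁⁻¹) * (a₂ ^ k * φ₂ * (a₂ ^ k)⁻¹ * φ₂⁻¹)) ∧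
    (∀ k : ℤ, ∃ p q r s : G, (a₁ * a₂ * b₁⁻¹ * b₂⁻¹) ^ k =
      (p * q * p⁻¹ * q⁻¹) * (r * s * r⁻¹ * s⁻¹)) ∧
    (∀ k : ℤ, ∃ s₁ s₂ s₃ s₄ : G,
      s₁ ^ 2 = 1 ∧ s₂ ^ 2 = 1 ∧ s₃ ^ 2 = 1 ∧ s₄ ^ 2 = 1 ∧
      (a₁ * a₂ * b₁⁻¹ * b₂⁻¹) ^ k = s₁ * s₂ * s₃ * s₄) := by
  have c12 : Commute a₁ a₂ := h12
  have c1b1 : Commute a₁ b₁ := ha1b1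
  have c1b2 : Commute a₁ b₂ := ha1b2
  have c2b1 : Commute a₂ b₁ := ha2b1
  have c2b2 : Commute a₂ b₂ := ha2b2
  have cb : Commute b₁ b₂ := hb12
  have main : ∀ k : ℤ, (a₁ * a₂ * b₁⁻¹ * b₂⁻¹) ^ k =
      (a₁ ^ k * φ₁ * (a₁ ^ k)⁻¹ * φ₁⁻¹) * (a₂ ^ k * φ₂ * (a₂ ^ k)⁻¹ * φ₂⁻¹) := by
    intro k
    have hpow : (a₁ * a₂ * b₁⁻¹ * b₂⁻¹) ^ k
        = a₁ ^ k * a₂ ^ k * (b₁ ^ k)⁻¹ * (b₂ ^ k)⁻¹ := by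
      have x1 : Commute (a₁ * a₂) b₂⁻¹ := (c1b2.inv_right).mul_left (c2b2.inv_right)
      have x3 : Commute b₁⁻¹ b₂⁻¹ := cb.inv_left.inv_right
      rw [Commute.mul_zpow (x1.mul_left x3),
        Commute.mul_zpow ((c1b1.inv_right).mul_left (c2b1.inv_right)),
        Commute.mul_zpow c12, inv_zpow, inv_zpow]
    have h1 : φ₁ * a₁ ^ k * φ₁⁻¹ = b₁ ^ k := by rw [← hc₁, conj_zpow]
    have h2 : φ₂ * a₂ ^ k * φ₂⁻¹ = b₂ ^ k := by rw [← hc₂, conj_zpow]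
    have hb1k : φ₁ * (a₁ ^ k)⁻¹ * φ₁⁻¹ = (b₁ ^ k)⁻¹ := by rw [← h1]; group
    have hb2k : φ₂ * (a₂ ^ k)⁻¹ * φ₂⁻¹ = (b₂ ^ k)⁻¹ := by rw [← h2]; group
    have hcomm : Commute (b₁ ^ k)⁻¹ (a₂ ^ k) := ((c2b1.symm.zpow_zpow k k).inv_left)
    calc (a₁ * a₂ * b₁⁻¹ * b₂⁻¹) ^ k
        = a₁ ^ k * a₂ ^ k * (b₁ ^ k)⁻¹ * (b₂ ^ k)⁻¹ := hpow
      _ = a₁ ^ k * ((b₁ ^ k)⁻¹ * a₂ ^ k) * (b₂ ^ k)⁻¹ := by rw [hcomm.eq]; group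
      _ = (a₁ ^ k * (φ₁ * (a₁ ^ k)⁻¹ * φ₁⁻¹)) * (a₂ ^ k * (φ₂ * (a₂ ^ k)⁻¹ * φ₂⁻¹)) := by
            rw [hb1k, hb2k]; group
      _ = (a₁ ^ k * φ₁ * (a₁ ^ k)⁻¹ * φ₁⁻¹) * (a₂ ^ k * φ₂ * (a₂ ^ k)⁻¹ * φ₂⁻¹) := by group
  refine ⟨main, fun k => ⟨a₁ ^ k, φ₁, a₂ ^ k, φ₂, main k⟩, ?_⟩
  intro k
  have e1 : φ₁⁻¹ = φ₁ := by rw [inv_eq_iff_mul_eq_one, ← pow_two, hφ₁]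
  have e2 : φ₂⁻¹ = φ₂ := by rw [inv_eq_iff_mul_eq_one, ← pow_two, hφ₂]
  refine ⟨a₁ ^ k * φ₁ * (a₁ ^ k)⁻¹, φ₁, a₂ ^ k * φ₂ * (a₂ ^ k)⁻¹, φ₂, ?_, hφ₁, ?_, hφ₂, ?_⟩
  · rw [conj_pow, hφ₁, mul_one, mul_inv_cancel]
  · rw [conj_pow, hφ₂, mul_one, mul_inv_cancel]
  · rw [main k, e1, e2]; group
end
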